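/- For the Cartesian product C_m × K_n of a cycle C_m and a complete graph K_n (m ≥ 3, n ≥ 2), the optimal cyclic bandwidth sum is at most n·((1/2)·m²·⌊n/2⌋·⌈n/2⌉ + 2m − 2); i.e., there exists a bijective labeling achieving CBS at most this bound. -/

import Mathlib

/-- Cyclic distance on labels in `{0,...,n-1}` (natural-number version). -/
def dCn (n a b : ℕ) : ℕ := min (Nat.dist a b) (n - Nat.dist a b)

/-- Cyclic bandwidth sum of a labeling `π` of the vertices of `G` by `{0,...,n-1}`. -/
noncomputable def CBS {V : Type*} [Fintype V] (n : ℕ) (G : SimpleGraph V)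
    (π : V → Fin n) : ℕ :=
  have := Classical.decEq V
  have : DecidableRel G.Adj := Classical.decRel _
  ∑ e ∈ G.edgeFinset,
    Sym2.lift ⟨fun u v => dCn n (π u) (π v),
      fun u v => by simp [dCn, Nat.dist_comm]⟩ e

/-- The cycle graph on `{0,...,m-1}`. -/
def cycleGraph (m : ℕ) : SimpleGraph (Fin m) where
  Adj a b := a ≠ b ∧ ((a.val + 1) % m = b.val ∨ (b.val + 1) % m = a.val)
  symm := ⟨by intro a b ⟨h1, h2⟩; exact ⟨h1.symm, h2.symm⟩⟩
  loopless := ⟨by intro a ⟨h1, _⟩; exact h1 rfl⟩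

open Finset

lemma sum_dart_edge {V : Type*} [Fintype V] [DecidableEq V] (G : SimpleGraph V)
    [DecidableRel G.Adj] (f : Sym2 V → ℕ) :
    ∑ d : G.Dart, f d.edge = 2 * ∑ e ∈ G.edgeFinset, f e := by
  rw [Finset.sum_comp f SimpleGraph.Dart.edge]
  have himg : (Finset.univ : Finset G.Dart).image SimpleGraph.Dart.edge = G.edgeFinset := by
    ext e
    simp only [Finset.mem_image, Finset.mem_univ, true_and, SimpleGraph.mem_edgeFinset]
    constructor
    · rintro ⟨d, rfl⟩; exact d.edge_mem
    · intro he
      induction e with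
      | _ u v => exact ⟨⟨(u, v), he⟩, rfl⟩
  rw [himg, Finset.mul_sum]
  refine Finset.sum_congr rfl fun e he => ?_
  rw [G.dart_edge_fiber_card e (SimpleGraph.mem_edgeFinset.mp he)]
  simp [two_nsmul, two_mul]

lemma sum_dart_pairs {V : Type*} [Fintype V] [DecidableEq V] (G : SimpleGraph V)
    [DecidableRel G.Adj] (g : V → V → ℕ) :
    ∑ d : G.Dart, g d.fst d.snd = ∑ u : V, ∑ v : V, if G.Adj u v then g u v else 0 := by
  have h1 : ∀ u : V, (∑ v : V, if G.Adj u v then g u v else 0)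
      = ∑ v ∈ Finset.univ.filter (fun v => G.Adj u v), g u v := fun u =>
    (Finset.sum_filter _ _).symm
  simp only [h1]
  symm
  rw [Finset.sum_sigma' Finset.univ (fun u => Finset.univ.filter (fun v => G.Adj u v))
    (fun u v => g u v)]
  refine Finset.sum_bij'
    (fun (p : (_ : V) × V) (hp : p ∈ Finset.univ.sigma
        (fun u => Finset.univ.filter (fun v => G.Adj u v))) =>
      (⟨(p.1, p.2), by simpa using (Finset.mem_sigma.mp hp).2⟩ : G.Dart))
    (fun (d : G.Dart) _ => (⟨d.fst, d.snd⟩ : (_ : V) × V))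
    ?_ ?_ ?_ ?_ ?_
  · intro p hp; exact Finset.mem_univ _
  · intro d _
    simp [Finset.mem_sigma, d.adj]
  · intro p hp; rfl
  · intro d _; rfl
  · intro p hp; rfl

lemma edgeFinset_insts {V : Type*} (G : SimpleGraph V) (i1 i2 : Fintype G.edgeSet) :
    @SimpleGraph.edgeFinset V G i1 = @SimpleGraph.edgeFinset V G i2 := by
  congr!

lemma two_mul_CBS {V : Type*} [Fintype V] [DecidableEq V] (N : ℕ) (G : SimpleGraph V)
    [DecidableRel G.Adj] (π : V → Fin N) :
    2 * CBS N G π = ∑ u : V, ∑ v : V, if G.Adj u v then dCn N (π u) (π v) else 0 := by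
  rw [CBS, edgeFinset_insts G _ (SimpleGraph.fintypeEdgeSet G),
    ← sum_dart_pairs G (fun u v => dCn N (π u) (π v)),
    ← sum_dart_edge G (f := Sym2.lift ⟨fun u v => dCn N (π u) (π v),
      fun u v => by simp [dCn, Nat.dist_comm]⟩)]
  rfl

instance cycleAdjDec (m : ℕ) : DecidableRel (cycleGraph m).Adj := fun a b =>
  decidable_of_iff (a ≠ b ∧ ((a.1 + 1) % m = b.1 ∨ (b.1 + 1) % m = a.1)) Iff.rfl

lemma cycle_adj_iff {m : ℕ} (hm : 3 ≤ m) (a c : Fin m) :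
    (cycleGraph m).Adj a c ↔ (c.1 = (a.1 + 1) % m ∨ c.1 = (a.1 + (m - 1)) % m) := by
  have ha := a.2; have hc := c.2
  have hA : (a.1 + 1 < m ∧ (a.1 + 1) % m = a.1 + 1) ∨ (a.1 + 1 = m ∧ (a.1 + 1) % m = 0) := by
    rcases Nat.lt_or_ge (a.1 + 1) m with h | h
    · exact Or.inl ⟨h, Nat.mod_eq_of_lt h⟩
    · have h1 : a.1 + 1 = m := by omega
      exact Or.inr ⟨h1, by rw [h1, Nat.mod_self]⟩
  have hC : (c.1 + 1 < m ∧ (c.1 + 1) % m = c.1 + 1) ∨ (c.1 + 1 = m ∧ (c.1 + 1) % m = 0) := by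
    rcases Nat.lt_or_ge (c.1 + 1) m with h | h
    · exact Or.inl ⟨h, Nat.mod_eq_of_lt h⟩
    · have h1 : c.1 + 1 = m := by omega
      exact Or.inr ⟨h1, by rw [h1, Nat.mod_self]⟩
  have hY : (a.1 = 0 ∧ (a.1 + (m - 1)) % m = m - 1)
      ∨ (1 ≤ a.1 ∧ (a.1 + (m - 1)) % m = a.1 - 1) := by
    rcases Nat.eq_zero_or_pos a.1 with h | h
    · refine Or.inl ⟨h, ?_⟩
      rw [h, Nat.zero_add, Nat.mod_eq_of_lt (by omega)]
    · refine Or.inr ⟨h, ?_⟩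
      have h2 : a.1 + (m - 1) - m = a.1 - 1 := by omega
      rw [Nat.mod_eq_sub_mod (by omega), h2, Nat.mod_eq_of_lt (by omega)]
  change (a ≠ c ∧ ((a.1 + 1) % m = c.1 ∨ (c.1 + 1) % m = a.1)) ↔ _
  rw [Ne, Fin.ext_iff]
  rcases hA with ⟨hA1, hA2⟩ | ⟨hA1, hA2⟩ <;>
    rcases hC with ⟨hC1, hC2⟩ | ⟨hC1, hC2⟩ <;>
      rcases hY with ⟨hY1, hY2⟩ | ⟨hY1, hY2⟩ <;>
        rw [hA2, hC2, hY2] <;> omega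

lemma cycle_filter {m : ℕ} (hm : 3 ≤ m) (a : Fin m) :
    Finset.univ.filter (fun c => (cycleGraph m).Adj a c)
      = {(⟨(a.1 + 1) % m, Nat.mod_lt _ (by omega)⟩ : Fin m),
         ⟨(a.1 + (m - 1)) % m, Nat.mod_lt _ (by omega)⟩} := by
  ext c
  simp only [Finset.mem_filter, Finset.mem_univ, true_and, Finset.mem_insert,
    Finset.mem_singleton, cycle_adj_iff hm, Fin.ext_iff]

lemma cycle_nbrs_ne {m : ℕ} (hm : 3 ≤ m) (a : Fin m) :
    (⟨(a.1 + 1) % m, Nat.mod_lt _ (by omega)⟩ : Fin m)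
      ≠ ⟨(a.1 + (m - 1)) % m, Nat.mod_lt _ (by omega)⟩ := by
  have ha := a.2
  have hA : (a.1 + 1 < m ∧ (a.1 + 1) % m = a.1 + 1) ∨ (a.1 + 1 = m ∧ (a.1 + 1) % m = 0) := by
    rcases Nat.lt_or_ge (a.1 + 1) m with h | h
    · exact Or.inl ⟨h, Nat.mod_eq_of_lt h⟩
    · have h1 : a.1 + 1 = m := by omega
      exact Or.inr ⟨h1, by rw [h1, Nat.mod_self]⟩
  have hY : (a.1 = 0 ∧ (a.1 + (m - 1)) % m = m - 1)
      ∨ (1 ≤ a.1 ∧ (a.1 + (m - 1)) % m = a.1 - 1) := by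
    rcases Nat.eq_zero_or_pos a.1 with h | h
    · refine Or.inl ⟨h, ?_⟩
      rw [h, Nat.zero_add, Nat.mod_eq_of_lt (by omega)]
    · refine Or.inr ⟨h, ?_⟩
      have h2 : a.1 + (m - 1) - m = a.1 - 1 := by omega
      rw [Nat.mod_eq_sub_mod (by omega), h2, Nat.mod_eq_of_lt (by omega)]
  rw [Ne, Fin.ext_iff]
  show ¬((a.1 + 1) % m = (a.1 + (m - 1)) % m)
  rcases hA with ⟨hA1, hA2⟩ | ⟨hA1, hA2⟩ <;>
    rcases hY with ⟨hY1, hY2⟩ | ⟨hY1, hY2⟩ <;>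
      rw [hA2, hY2] <;> omega

lemma dCn_cycle {m n : ℕ} (hm : 3 ≤ m) (a x : Fin m) (b : Fin n)
    (hx : x.1 = (a.1 + 1) % m ∨ x.1 = (a.1 + (m - 1)) % m) :
    dCn (m * n) (b.1 + n * a.1) (b.1 + n * x.1) = n := by
  have ha := a.2; have hb := b.2
  have h2n : 2 * n ≤ m * n := Nat.mul_le_mul_right n (by omega)
  have hx' : (x.1 = a.1 + 1) ∨ (a.1 + 1 = m ∧ x.1 = 0) ∨ (a.1 = 0 ∧ x.1 = m - 1)
      ∨ (x.1 + 1 = a.1) := by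
    have hA : (a.1 + 1 < m ∧ (a.1 + 1) % m = a.1 + 1) ∨ (a.1 + 1 = m ∧ (a.1 + 1) % m = 0) := by
      rcases Nat.lt_or_ge (a.1 + 1) m with h | h
      · exact Or.inl ⟨h, Nat.mod_eq_of_lt h⟩
      · have h1 : a.1 + 1 = m := by omega
        exact Or.inr ⟨h1, by rw [h1, Nat.mod_self]⟩
    have hY : (a.1 = 0 ∧ (a.1 + (m - 1)) % m = m - 1)
        ∨ (1 ≤ a.1 ∧ (a.1 + (m - 1)) % m = a.1 - 1) := by
      rcases Nat.eq_zero_or_pos a.1 with h | h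
      · refine Or.inl ⟨h, ?_⟩
        rw [h, Nat.zero_add, Nat.mod_eq_of_lt (by omega)]
      · refine Or.inr ⟨h, ?_⟩
        have h2 : a.1 + (m - 1) - m = a.1 - 1 := by omega
        rw [Nat.mod_eq_sub_mod (by omega), h2, Nat.mod_eq_of_lt (by omega)]
    rcases hA with ⟨hA1, hA2⟩ | ⟨hA1, hA2⟩ <;>
      rcases hY with ⟨hY1, hY2⟩ | ⟨hY1, hY2⟩ <;>
        rw [hA2, hY2] at hx <;> omega
  unfold dCn Nat.dist
  rcases hx' with h | ⟨h1, h2⟩ | ⟨h1, h2⟩ | h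
  · have e : n * x.1 = n * a.1 + n := by rw [h]; ring
    rw [e]
    generalize n * (a.1 : ℕ) = p
    generalize m * n = N at h2n ⊢
    omega
  · have e : n * x.1 = 0 := by rw [h2]; ring
    have e2 : n * a.1 + n = m * n := by
      have h3 : n * (a.1 + 1) = n * m := by rw [h1]
      calc n * a.1 + n = n * (a.1 + 1) := by ring
        _ = m * n := by rw [h3, Nat.mul_comm]
    clear hx ha
    rw [e]
    generalize n * (a.1 : ℕ) = p at e2 ⊢
    generalize m * n = N at e2 h2n ⊢
    omega
  · have e : n * a.1 = 0 := by rw [h1]; ring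
    have hx1 : x.1 + 1 = m := by omega
    have e2 : n * x.1 + n = m * n := by
      have h3 : n * (x.1 + 1) = n * m := by rw [hx1]
      calc n * x.1 + n = n * (x.1 + 1) := by ring
        _ = m * n := by rw [h3, Nat.mul_comm]
    clear hx ha
    rw [e]
    generalize n * (x.1 : ℕ) = p at e2 ⊢
    generalize m * n = N at e2 h2n ⊢
    omega
  · have e : n * a.1 = n * x.1 + n := by rw [← h]; ring
    rw [e]
    generalize n * (x.1 : ℕ) = p
    generalize m * n = N at h2n ⊢
    omega

lemma dCn_complete {m n : ℕ} (hm : 2 ≤ m) (b d : Fin n) (p : ℕ) :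
    dCn (m * n) (b.1 + p) (d.1 + p) = Nat.dist b.1 d.1 := by
  have hb := b.2; have hd := d.2
  have h2n : 2 * n ≤ m * n := Nat.mul_le_mul_right n (by omega)
  unfold dCn Nat.dist
  generalize m * n = N at h2n ⊢
  omega

lemma gauss_sum (n : ℕ) : 2 * ∑ b : Fin n, (n - b.1) = n * (n + 1) := by
  induction n with
  | zero => simp
  | succ k ih =>
    rw [Fin.sum_univ_castSucc]
    simp only [Fin.coe_castSucc, Fin.val_last]
    have h : ∀ b : Fin k, k + 1 - b.1 = (k - b.1) + 1 := fun b => by have := b.2; omega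
    rw [Finset.sum_congr rfl (fun b _ => h b), Finset.sum_add_distrib]
    simp only [Finset.sum_const, Finset.card_univ, Fintype.card_fin, smul_eq_mul, mul_one]
    have : k + 1 - k = 1 := by omega
    rw [this]
    nlinarith [ih]

lemma dist_cube (n : ℕ) :
    3 * (∑ b : Fin n, ∑ d : Fin n, Nat.dist b.1 d.1) + n = n ^ 3 := by
  induction n with
  | zero => simp
  | succ k ih =>
    have h1 : ∀ b : Fin k, Nat.dist b.1 k = k - b.1 := fun b => by
      have := b.2; unfold Nat.dist; omega
    have h2 : ∀ d : Fin k, Nat.dist k d.1 = k - d.1 := fun d => by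
      have := d.2; unfold Nat.dist; omega
    rw [Fin.sum_univ_castSucc]
    simp only [Fin.coe_castSucc, Fin.val_last]
    have hrow : ∀ b : Fin k, (∑ d : Fin (k + 1), Nat.dist (b.1 : ℕ) d.1)
        = (∑ d : Fin k, Nat.dist b.1 d.1) + (k - b.1) := by
      intro b
      rw [Fin.sum_univ_castSucc]
      simp only [Fin.coe_castSucc, Fin.val_last, h1 b]
    have hlast : (∑ d : Fin (k + 1), Nat.dist (k : ℕ) d.1) = ∑ d : Fin k, (k - d.1) := by
      rw [Fin.sum_univ_castSucc]
      simp only [Fin.coe_castSucc, Fin.val_last, Nat.dist_self, add_zero]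
      exact Finset.sum_congr rfl fun d _ => h2 d
    rw [Finset.sum_congr rfl (fun b _ => hrow b), Finset.sum_add_distrib, hlast]
    have hg := gauss_sum k
    nlinarith [ih, hg]

theorem cbs_boxProd_cycle_complete_ub (m n : ℕ) (hm : 3 ≤ m) (hn : 2 ≤ n) :
    ∃ π : (Fin m × Fin n) ≃ Fin (m * n),
      (CBS (m * n) ((cycleGraph m).boxProd (⊤ : SimpleGraph (Fin n))) π : ℚ) ≤
        (n : ℚ) * ((1 / 2) * m ^ 2 * (n / 2 : ℕ) * ((n + 1) / 2 : ℕ) + 2 * m - 2) := by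
  classical
  refine ⟨finProdFinEquiv, ?_⟩
  set G := (cycleGraph m).boxProd (⊤ : SimpleGraph (Fin n)) with hG
  set f : (Fin m × Fin n) → (Fin m × Fin n) → ℕ :=
    fun u v => dCn (m * n) ((finProdFinEquiv u : Fin (m * n)) : ℕ)
      ((finProdFinEquiv v : Fin (m * n)) : ℕ) with hf
  set T : ℕ := ∑ b : Fin n, ∑ d : Fin n, Nat.dist b.1 d.1 with hT
  have h2CBS : 2 * CBS (m * n) G (⇑finProdFinEquiv) = 2 * m * n ^ 2 + m * T := by
    rw [two_mul_CBS (m * n) G (⇑finProdFinEquiv)]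
    have hsplit : ∀ u v : Fin m × Fin n,
        (if G.Adj u v then f u v else 0)
          = (if (cycleGraph m).Adj u.1 v.1 ∧ u.2 = v.2 then f u v else 0)
            + (if u.2 ≠ v.2 ∧ u.1 = v.1 then f u v else 0) := by
      intro u v
      by_cases h1 : (cycleGraph m).Adj u.1 v.1 ∧ u.2 = v.2
      · have h2 : ¬(u.2 ≠ v.2 ∧ u.1 = v.1) := fun h => h.1 h1.2
        have hA : G.Adj u v := SimpleGraph.boxProd_adj.mpr (Or.inl h1)
        simp [hA, h1, h2]
      · by_cases h2 : u.2 ≠ v.2 ∧ u.1 = v.1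
        · have hA : G.Adj u v := SimpleGraph.boxProd_adj.mpr (Or.inr ⟨h2.1, h2.2⟩)
          simp [hA, h1, h2]
        · have hA : ¬G.Adj u v := by
            rw [hG, SimpleGraph.boxProd_adj]
            push_neg
            constructor
            · intro hadj heq; exact h1 ⟨hadj, heq⟩
            · intro hne heq; exact h2 ⟨hne, heq⟩
          simp [hA, h1, h2]
    calc (∑ u : Fin m × Fin n, ∑ v : Fin m × Fin n, if G.Adj u v then f u v else 0)
        = (∑ u : Fin m × Fin n, ∑ v : Fin m × Fin n,
            if (cycleGraph m).Adj u.1 v.1 ∧ u.2 = v.2 then f u v else 0)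
          + (∑ u : Fin m × Fin n, ∑ v : Fin m × Fin n,
            if u.2 ≠ v.2 ∧ u.1 = v.1 then f u v else 0) := by
          rw [← Finset.sum_add_distrib]
          refine Finset.sum_congr rfl fun u _ => ?_
          rw [← Finset.sum_add_distrib]
          exact Finset.sum_congr rfl fun v _ => hsplit u v
      _ = 2 * m * n ^ 2 + m * T := by
          congr 1
          · -- cycle part
            rw [Fintype.sum_prod_type]
            simp only [Fintype.sum_prod_type]
            have hd : ∀ (a : Fin m) (b : Fin n) (c : Fin m),
                (∑ d : Fin n, if (cycleGraph m).Adj a c ∧ b = d then f (a, b) (c, d) else 0)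
                  = (if (cycleGraph m).Adj a c then f (a, b) (c, b) else 0) := by
              intro a b c
              have hpt : ∀ d : Fin n, (if (cycleGraph m).Adj a c ∧ b = d then f (a, b) (c, d) else 0)
                  = (if b = d then (if (cycleGraph m).Adj a c then f (a, b) (c, d) else 0) else 0) := by
                intro d
                by_cases hb : b = d <;> by_cases hA : (cycleGraph m).Adj a c <;> simp [hb, hA]
              rw [Finset.sum_congr rfl (fun d _ => hpt d), Finset.sum_ite_eq]
              simp
            have hc : ∀ (a : Fin m) (b : Fin n),
                (∑ c : Fin m, if (cycleGraph m).Adj a c then f (a, b) (c, b) else 0) = 2 * n := by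
              intro a b
              rw [← Finset.sum_filter, cycle_filter hm a,
                Finset.sum_pair (cycle_nbrs_ne hm a)]
              have e1 : f (a, b) (⟨(a.1 + 1) % m, Nat.mod_lt _ (by omega)⟩, b) = n := by
                simp only [hf, finProdFinEquiv_apply_val]
                exact dCn_cycle hm a ⟨(a.1 + 1) % m, Nat.mod_lt _ (by omega)⟩ b (Or.inl rfl)
              have e2 : f (a, b) (⟨(a.1 + (m - 1)) % m, Nat.mod_lt _ (by omega)⟩, b) = n := by
                simp only [hf, finProdFinEquiv_apply_val]
                exact dCn_cycle hm a ⟨(a.1 + (m - 1)) % m, Nat.mod_lt _ (by omega)⟩ b (Or.inr rfl)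
              rw [e1, e2]; ring
            calc (∑ a : Fin m, ∑ b : Fin n, ∑ c : Fin m, ∑ d : Fin n,
                  if (cycleGraph m).Adj a c ∧ b = d then f (a, b) (c, d) else 0)
                = ∑ a : Fin m, ∑ b : Fin n, (2 * n : ℕ) := by
                  refine Finset.sum_congr rfl fun a _ => Finset.sum_congr rfl fun b _ => ?_
                  rw [Finset.sum_congr rfl (fun c _ => hd a b c), hc a b]
              _ = 2 * m * n ^ 2 := by
                  simp [Finset.sum_const, Finset.card_univ]
                  ring
          · -- complete part
            rw [Fintype.sum_prod_type]
            simp only [Fintype.sum_prod_type]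
            have hswap : ∀ (a : Fin m) (b : Fin n),
                (∑ c : Fin m, ∑ d : Fin n, if b ≠ d ∧ a = c then f (a, b) (c, d) else 0)
                  = ∑ d : Fin n, Nat.dist b.1 d.1 := by
              intro a b
              have h1 : ∀ c : Fin m,
                  (∑ d : Fin n, if b ≠ d ∧ a = c then f (a, b) (c, d) else 0)
                    = (if a = c then ∑ d : Fin n, (if b ≠ d then f (a, b) (c, d) else 0) else 0) := by
                intro c
                by_cases hac : a = c
                · simp [hac]
                · simp [hac]
              rw [Finset.sum_congr rfl (fun c _ => h1 c), Finset.sum_ite_eq]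
              simp only [Finset.mem_univ, if_true]
              refine Finset.sum_congr rfl fun d _ => ?_
              by_cases hbd : b = d
              · simp [hbd, Nat.dist_self]
              · have hval : f (a, b) (a, d) = Nat.dist b.1 d.1 := by
                  simp only [hf, finProdFinEquiv_apply_val]
                  exact dCn_complete (by omega) b d (n * a.1)
                simp [hbd, hval]
            calc (∑ a : Fin m, ∑ b : Fin n, ∑ c : Fin m, ∑ d : Fin n,
                  if b ≠ d ∧ a = c then f (a, b) (c, d) else 0)
                = ∑ a : Fin m, T := by
                  refine Finset.sum_congr rfl fun a _ => ?_
                  rw [hT]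
                  exact Finset.sum_congr rfl fun b _ => hswap a b
              _ = m * T := by
                  simp [Finset.sum_const, Finset.card_univ]
  have hTn : 3 * T + n = n ^ 3 := dist_cube n
  -- cast to ℚ
  have hc6 : (CBS (m * n) G (⇑finProdFinEquiv) : ℚ) * 6
      = 6 * (m : ℚ) * n ^ 2 + (m : ℚ) * n ^ 3 - (m : ℚ) * n := by
    have h1 := congrArg (fun k : ℕ => (k : ℚ)) h2CBS
    have h2 := congrArg (fun k : ℕ => (k : ℚ)) hTn
    push_cast at h1 h2
    have h3 : (m : ℚ) * (3 * (T : ℚ) + (n : ℚ)) = (m : ℚ) * (n : ℚ) ^ 3 := by rw [h2]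
    ring_nf at h1 h3 ⊢
    linarith [h1, h3]
  have hm' : (3 : ℚ) ≤ m := by exact_mod_cast hm
  have hineq : 6 * (m : ℚ) * n ^ 2 + (m : ℚ) * n ^ 3 - (m : ℚ) * n
      ≤ 6 * ((n : ℚ) * ((1 / 2) * m ^ 2 * ((n / 2 : ℕ) : ℚ) * (((n + 1) / 2 : ℕ) : ℚ) + 2 * m - 2)) := by
    rcases Nat.even_or_odd n with ⟨q, hq⟩ | ⟨q, hq⟩
    · have e1 : n / 2 = q := by omega
      have e2 : (n + 1) / 2 = q := by omega
      have hq1 : 1 ≤ q := by omega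
      have hnq : (n : ℚ) = 2 * q := by
        have h : n = 2 * q := by omega
        exact_mod_cast h
      have hq1' : (1 : ℚ) ≤ q := by exact_mod_cast hq1
      rw [e1, e2, hnq]
      have hA : (0 : ℚ) ≤ (m : ℚ) - 3 := by linarith
      have hB : (0 : ℚ) ≤ (q : ℚ) - 1 := by linarith
      have h01 := hB
      have h02 := mul_nonneg hB hB
      have h03 := mul_nonneg (mul_nonneg hB hB) hB
      have h10 := hA
      have h11 := mul_nonneg hA hB
      have h12 := mul_nonneg hA h02
      have h13 := mul_nonneg hA h03
      have h20 := mul_nonneg hA hA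
      have h21 := mul_nonneg h20 hB
      have h22 := mul_nonneg h20 h02
      have h23 := mul_nonneg h20 h03
      linarith [h01, h02, h03, h10, h11, h12, h13, h20, h21, h22, h23]
    · have e1 : n / 2 = q := by omega
      have e2 : (n + 1) / 2 = q + 1 := by omega
      have hq1 : 1 ≤ q := by omega
      have hnq : (n : ℚ) = 2 * q + 1 := by
        exact_mod_cast hq
      have hq1' : (1 : ℚ) ≤ q := by exact_mod_cast hq1
      rw [e1, e2, hnq]
      have hA : (0 : ℚ) ≤ (m : ℚ) - 3 := by linarith
      have hB : (0 : ℚ) ≤ (q : ℚ) - 1 := by linarith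
      push_cast
      have h01 := hB
      have h02 := mul_nonneg hB hB
      have h03 := mul_nonneg (mul_nonneg hB hB) hB
      have h10 := hA
      have h11 := mul_nonneg hA hB
      have h12 := mul_nonneg hA h02
      have h13 := mul_nonneg hA h03
      have h20 := mul_nonneg hA hA
      have h21 := mul_nonneg h20 hB
      have h22 := mul_nonneg h20 h02
      have h23 := mul_nonneg h20 h03
      linarith [h01, h02, h03, h10, h11, h12, h13, h20, h21, h22, h23]
  linarith [hc6, hineq]
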